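/- Let X be a separable complete metric space, Ω = C([0,∞) → X) the space of continuous paths with the compact-open topology, Ω_x = {w ∈ Ω : w(0) = x}, θ_s the shift (θ_s w)(t) = w(s+t), and w ⋈_s v the splicing of paths with w(s) = v(0). Suppose S : X → 2^Ω satisfies: (S1) S(x) is a nonempty compact subset of Ω_x for every x; (S2) for every closed K ⊆ Ω the set {x ∈ X : S(x) ∩ K ≠ ∅} is Borel in X; (S3) if w ∈ S(x) and s ≥ 0 then θ_s w ∈ S(w(s)); (S4) if w ∈ S(x) and v ∈ S(w(s)) then w ⋈_s v ∈ S(x). Then S has a Borel measurable selection 𝔲 : X → Ω (𝔲(·,x) ∈ S(x) for all x) with the semigroup property 𝔲(t₂, 𝔲(t₁, x)) = 𝔲(t₁ + t₂, x) for all t₁, t₂ ≥ 0 and all x ∈ X; moreover, for each t ≥ 0 the map U(t) : X → X, U(t)(x) = 𝔲(t,x), is Borel measurable. -/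

import Mathlib

set_option linter.unusedSectionVars false


open MeasureTheory Set
open scoped NNReal

noncomputable section

/-- The space `Ω = C([0,∞) → X)` of continuous one-sided infinite paths in `X`,
with the compact-open topology (topology of uniform convergence on compacts). -/
abbrev IPath (X : Type*) [TopologicalSpace X] : Type _ := C(ℝ≥0, X)

variable {X : Type*} [TopologicalSpace X]

/-- The shift `θ_s : w(·) ↦ w(s + ·)`. -/
def shift (s : ℝ≥0) (w : IPath X) : IPath X :=
  w.comp ⟨fun t => s + t, by fun_prop⟩

/-- The splicing `w ⋈_s v` of two paths with `w s = v 0`: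
`(w ⋈_s v)(t) = w(t)` for `t ≤ s` and `(w ⋈_s v)(t) = v(t - s)` for `t ≥ s`. -/
def splice (s : ℝ≥0) (w v : IPath X) (h : w s = v 0) : IPath X :=
  ⟨fun t => if t ≤ s then w t else v (t - s), by
    refine Continuous.if_le w.continuous (v.continuous.comp ?_) continuous_id
      continuous_const ?_
    · exact continuous_id.sub continuous_const
    · intro t ht
      rw [ht, tsub_self]
      exact h⟩

/-- The Borel σ-algebra on the path space. -/
instance : MeasurableSpace (IPath X) := borel _
instance : BorelSpace (IPath X) := ⟨rfl⟩

namespace SemiflowAux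

lemma shift_apply (s : ℝ≥0) (w : IPath X) (t : ℝ≥0) : shift s w t = w (s + t) := rfl

lemma splice_apply_of_le (s : ℝ≥0) (w v : IPath X) (h : w s = v 0) {t : ℝ≥0} (ht : t ≤ s) :
    splice s w v h t = w t := if_pos ht

lemma shift_splice (s : ℝ≥0) (w v : IPath X) (h : w s = v 0) :
    shift s (splice s w v h) = v := by
  ext t
  show (if s + t ≤ s then w (s + t) else v (s + t - s)) = v t
  rcases eq_or_ne t 0 with rfl | ht
  · simp [h.symm]
  · rw [if_neg, add_tsub_cancel_left]
    simpa using ht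

variable {M : Type*} [MetricSpace M]

/-- The basic functional. -/
def J (lam : ℝ) (f : M → ℝ) (w : IPath M) : ℝ :=
  ∫ t in Ioi (0:ℝ), Real.exp (-lam * t) * f (w t.toNNReal)

variable {lam : ℝ} {f : M → ℝ}

lemma cont_integrand (hf : Continuous f) (w : IPath M) :
    Continuous fun t : ℝ => Real.exp (-lam * t) * f (w t.toNNReal) := by
  exact ((Real.continuous_exp.comp (continuous_const.mul continuous_id)).mul (hf.comp (w.continuous.comp continuous_real_toNNReal)))

lemma integrand_bound (hf1 : ∀ y, |f y| ≤ 1) (w : IPath M) (t : ℝ) :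
    ‖Real.exp (-lam * t) * f (w t.toNNReal)‖ ≤ Real.exp (-lam * t) := by
  rw [Real.norm_eq_abs, abs_mul, abs_of_pos (Real.exp_pos _)]
  nlinarith [Real.exp_pos (-lam * t), hf1 (w t.toNNReal), abs_nonneg (f (w t.toNNReal))]

lemma integrableJ (hlam : 0 < lam) (hf : Continuous f) (hf1 : ∀ y, |f y| ≤ 1) (w : IPath M) :
    IntegrableOn (fun t : ℝ => Real.exp (-lam * t) * f (w t.toNNReal)) (Ioi 0) := by
  refine Integrable.mono' (exp_neg_integrableOn_Ioi 0 hlam)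
    ((cont_integrand hf w).aestronglyMeasurable.restrict) ?_
  exact Filter.Eventually.of_forall fun t => integrand_bound hf1 w t

/-- Translation for the tail integral. -/
lemma tail_integral (g : ℝ → ℝ) (s : ℝ) :
    ∫ t in Ioi s, g t = ∫ t in Ioi (0:ℝ), g (t + s) := by
  have h := (measurePreserving_add_right (volume : Measure ℝ) s).setIntegral_preimage_emb
    (MeasurableEquiv.addRight s).measurableEmbedding g (Ioi s)
  rw [← h]
  congr 1
  ext t
  simp [lt_add_iff_pos_left]

lemma J_split (hlam : 0 < lam) (hf : Continuous f) (hf1 : ∀ y, |f y| ≤ 1)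
    (w : IPath M) (s : ℝ≥0) :
    J lam f w = (∫ t in Ioc (0:ℝ) s, Real.exp (-lam * t) * f (w t.toNNReal))
      + Real.exp (-lam * s) * J lam f (shift s w) := by
  have hint := integrableJ hlam hf hf1 w
  have hsplit : (Ioi (0:ℝ)) = Ioc (0:ℝ) s ∪ Ioi (s:ℝ) :=
    (Ioc_union_Ioi_eq_Ioi s.coe_nonneg).symm
  have hdisj : Disjoint (Ioc (0:ℝ) s) (Ioi (s:ℝ)) := Ioc_disjoint_Ioi le_rfl
  have h1 : J lam f w = (∫ t in Ioc (0:ℝ) s, Real.exp (-lam * t) * f (w t.toNNReal))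
      + ∫ t in Ioi (s:ℝ), Real.exp (-lam * t) * f (w t.toNNReal) := by
    rw [J, hsplit, setIntegral_union hdisj measurableSet_Ioi
      (hint.mono_set (by rw [hsplit]; exact subset_union_left))
      (hint.mono_set (by rw [hsplit]; exact subset_union_right))]
  rw [h1, tail_integral]
  congr 1
  rw [J, ← integral_const_mul]
  refine setIntegral_congr_fun measurableSet_Ioi fun t ht => ?_
  have ht' : (0:ℝ) ≤ t := le_of_lt ht
  have htn : (t + (s:ℝ)).toNNReal = s + t.toNNReal := by
    rw [Real.toNNReal_add ht' s.coe_nonneg, Real.toNNReal_coe, add_comm]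
  rw [shift_apply, ← htn, ← mul_assoc, ← Real.exp_add]
  ring_nf

lemma J_splice (hlam : 0 < lam) (hf : Continuous f) (hf1 : ∀ y, |f y| ≤ 1)
    (w v : IPath M) (s : ℝ≥0) (h : w s = v 0) :
    J lam f (splice s w v h) = (∫ t in Ioc (0:ℝ) s, Real.exp (-lam * t) * f (w t.toNNReal))
      + Real.exp (-lam * s) * J lam f v := by
  rw [J_split hlam hf hf1 (splice s w v h) s, shift_splice]
  congr 1
  refine setIntegral_congr_fun measurableSet_Ioc fun t ht => ?_
  have : t.toNNReal ≤ s := Real.toNNReal_le_iff_le_coe.2 ht.2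
  rw [splice_apply_of_le s w v h this]

/-- The key consequence: minimality transfers through shift/splice. -/
lemma J_splice_sub (hlam : 0 < lam) (hf : Continuous f) (hf1 : ∀ y, |f y| ≤ 1)
    (w v : IPath M) (s : ℝ≥0) (h : w s = v 0) :
    J lam f (splice s w v h) - J lam f w
      = Real.exp (-lam * s) * (J lam f v - J lam f (shift s w)) := by
  rw [J_splice hlam hf hf1 w v s h, J_split hlam hf hf1 w s]
  ring

lemma J_cont (hlam : 1 ≤ lam) (hlip : LipschitzWith 1 f) (hf1 : ∀ y, |f y| ≤ 1) :
    Continuous (J lam f) := by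
  have hf : Continuous f := hlip.continuous
  have hlam0 : 0 < lam := lt_of_lt_of_le one_pos hlam
  rw [continuous_iff_continuousAt]
  intro w
  rw [ContinuousAt, Metric.tendsto_nhds]
  intro ε hε
  set T : ℝ := max 1 (Real.log (4 / ε) + 1) with hT_def
  have hT1 : (1:ℝ) ≤ T := le_max_left _ _
  have hT0 : (0:ℝ) < T := lt_of_lt_of_le one_pos hT1
  have htail : Real.exp (-T) < ε / 4 := by
    have h4ε : (0:ℝ) < 4 / ε := by positivity
    have : Real.log (4 / ε) + 1 ≤ T := le_max_right _ _
    have h1 : Real.exp (-T) ≤ Real.exp (-(Real.log (4 / ε) + 1)) := by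
      apply Real.exp_le_exp.2; linarith
    have h2 : Real.exp (-(Real.log (4 / ε) + 1))
        = Real.exp (-Real.log (4 / ε)) * Real.exp (-1) := by
      rw [← Real.exp_add]; ring_nf
    have h3 : Real.exp (-Real.log (4 / ε)) = ε / 4 := by
      rw [Real.exp_neg, Real.exp_log h4ε]
      field_simp
    have h4 : Real.exp (-1 : ℝ) < 1 := by
      rw [Real.exp_lt_one_iff]; norm_num
    calc Real.exp (-T) ≤ Real.exp (-Real.log (4/ε)) * Real.exp (-1) := h2 ▸ h1
      _ < (ε/4) * 1 := by rw [h3]; exact mul_lt_mul_of_pos_left h4 (by positivity)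
      _ = ε / 4 := by ring
  set δ : ℝ := ε / (4 * T) with hδ_def
  have hδ0 : 0 < δ := by positivity
  -- the neighborhood
  set T' : ℝ≥0 := T.toNNReal with hT'_def
  haveI : CompactSpace (Icc (0:ℝ≥0) T') := isCompact_iff_compactSpace.mp isCompact_Icc
  set R : C(ℝ≥0, M) → C(Icc (0:ℝ≥0) T', M) := fun g => g.restrict (Icc 0 T') with hR_def
  have hRc : Continuous R := ContinuousMap.continuous_restrict _
  have hnb : R ⁻¹' Metric.ball (R w) δ ∈ nhds w :=
    hRc.continuousAt.preimage_mem_nhds (Metric.ball_mem_nhds _ hδ0)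
  filter_upwards [hnb] with w' hw'
  have hclose : ∀ t : ℝ, t ∈ Ioc (0:ℝ) T → dist (w' t.toNNReal) (w t.toNNReal) ≤ δ := by
    intro t ht
    have hmem : t.toNNReal ∈ Icc (0:ℝ≥0) T' := by
      constructor
      · exact zero_le
      · exact Real.toNNReal_le_toNNReal ht.2
    have := ContinuousMap.dist_apply_le_dist (f := R w') (g := R w) ⟨t.toNNReal, hmem⟩
    calc dist (w' t.toNNReal) (w t.toNNReal) ≤ dist (R w') (R w) := this
      _ ≤ δ := le_of_lt (by simpa [Metric.mem_ball] using hw')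
  -- main estimate
  have hint' := integrableJ hlam0 hf hf1 w'
  have hint := integrableJ hlam0 hf hf1 w
  have hsub : IntegrableOn (fun t : ℝ => Real.exp (-lam * t) * f (w' t.toNNReal)
      - Real.exp (-lam * t) * f (w t.toNNReal)) (Ioi 0) := hint'.sub hint
  have hsplit : (Ioi (0:ℝ)) = Ioc (0:ℝ) T ∪ Ioi T := (Ioc_union_Ioi_eq_Ioi hT0.le).symm
  have key : dist (J lam f w') (J lam f w) ≤ δ * T + 2 * Real.exp (-T) := by
    rw [Real.dist_eq, J, J, ← integral_sub hint' hint]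
    have habs : |∫ t in Ioi (0:ℝ), (Real.exp (-lam * t) * f (w' t.toNNReal)
        - Real.exp (-lam * t) * f (w t.toNNReal))|
        ≤ ∫ t in Ioi (0:ℝ), |Real.exp (-lam * t) * f (w' t.toNNReal)
        - Real.exp (-lam * t) * f (w t.toNNReal)| := by
      simpa using MeasureTheory.norm_integral_le_integral_norm (μ := (volume : Measure ℝ).restrict (Ioi 0)) fun t => Real.exp (-lam * t) * f (w' t.toNNReal) - Real.exp (-lam * t) * f (w t.toNNReal)
    refine le_trans habs ?_
    have habs_int : IntegrableOn (fun t : ℝ => |Real.exp (-lam * t) * f (w' t.toNNReal)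
        - Real.exp (-lam * t) * f (w t.toNNReal)|) (Ioi 0) := hsub.abs
    rw [hsplit, setIntegral_union (Ioc_disjoint_Ioi le_rfl) measurableSet_Ioi
      (habs_int.mono_set (by rw [hsplit]; exact subset_union_left))
      (habs_int.mono_set (by rw [hsplit]; exact subset_union_right))]
    have h_head : (∫ t in Ioc (0:ℝ) T, |Real.exp (-lam * t) * f (w' t.toNNReal)
        - Real.exp (-lam * t) * f (w t.toNNReal)|) ≤ δ * T := by
      have hb : ∀ t ∈ Ioc (0:ℝ) T, |Real.exp (-lam * t) * f (w' t.toNNReal)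
          - Real.exp (-lam * t) * f (w t.toNNReal)| ≤ δ := by
        intro t ht
        rw [← mul_sub, abs_mul, abs_of_pos (Real.exp_pos _)]
        have h1 : Real.exp (-lam * t) ≤ 1 := by
          rw [Real.exp_le_one_iff]
          nlinarith [ht.1]
        have h2 : |f (w' t.toNNReal) - f (w t.toNNReal)| ≤ δ := by
          have := hlip.dist_le_mul (w' t.toNNReal) (w t.toNNReal)
          rw [Real.dist_eq] at this
          calc |f (w' t.toNNReal) - f (w t.toNNReal)|
              ≤ 1 * dist (w' t.toNNReal) (w t.toNNReal) := this
            _ ≤ δ := by rw [one_mul]; exact hclose t ht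
        nlinarith [abs_nonneg (f (w' t.toNNReal) - f (w t.toNNReal)), Real.exp_pos (-lam * t)]
      calc (∫ t in Ioc (0:ℝ) T, |Real.exp (-lam * t) * f (w' t.toNNReal)
            - Real.exp (-lam * t) * f (w t.toNNReal)|)
          ≤ ∫ _ in Ioc (0:ℝ) T, δ := by
            refine setIntegral_mono_on
              (habs_int.mono_set (by rw [hsplit]; exact subset_union_left))
              (integrableOn_const (by rw [Real.volume_Ioc]; exact ENNReal.ofReal_ne_top))
              measurableSet_Ioc hb
        _ = δ * T := by
            rw [setIntegral_const, measureReal_def, Real.volume_Ioc, smul_eq_mul,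
              ENNReal.toReal_ofReal (by linarith)]
            ring
    have h_tail : (∫ t in Ioi T, |Real.exp (-lam * t) * f (w' t.toNNReal)
        - Real.exp (-lam * t) * f (w t.toNNReal)|) ≤ 2 * Real.exp (-T) := by
      have hb : ∀ t ∈ Ioi T, |Real.exp (-lam * t) * f (w' t.toNNReal)
          - Real.exp (-lam * t) * f (w t.toNNReal)| ≤ 2 * Real.exp (-t) := by
        intro t ht
        have ht0 : (0:ℝ) < t := lt_of_le_of_lt hT0.le ht
        have h1 : Real.exp (-lam * t) ≤ Real.exp (-t) := by
          apply Real.exp_le_exp.2; nlinarith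
        calc |Real.exp (-lam * t) * f (w' t.toNNReal)
              - Real.exp (-lam * t) * f (w t.toNNReal)|
            ≤ |Real.exp (-lam * t) * f (w' t.toNNReal)|
              + |Real.exp (-lam * t) * f (w t.toNNReal)| := abs_sub _ _
          _ ≤ Real.exp (-lam * t) + Real.exp (-lam * t) := by
              have := integrand_bound (lam := lam) hf1 w' t
              have := integrand_bound (lam := lam) hf1 w t
              simp only [Real.norm_eq_abs] at *
              linarith
          _ ≤ 2 * Real.exp (-t) := by linarith
      have hexp_int : IntegrableOn (fun t : ℝ => 2 * Real.exp (-t)) (Ioi T) := by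
        have := exp_neg_integrableOn_Ioi T (one_pos)
        simp only [neg_mul, one_mul] at this
        exact this.const_mul 2
      calc (∫ t in Ioi T, |Real.exp (-lam * t) * f (w' t.toNNReal)
            - Real.exp (-lam * t) * f (w t.toNNReal)|)
          ≤ ∫ t in Ioi T, 2 * Real.exp (-t) := by
            refine setIntegral_mono_on
              (habs_int.mono_set (by rw [hsplit]; exact subset_union_right))
              hexp_int measurableSet_Ioi hb
        _ = 2 * Real.exp (-T) := by rw [integral_const_mul, integral_exp_neg_Ioi]
    linarith
  have hδT : δ * T = ε / 4 := by
    rw [hδ_def]; field_simp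
  calc dist (J lam f w') (J lam f w) ≤ δ * T + 2 * Real.exp (-T) := key
    _ < ε / 4 + 2 * (ε / 4) := by linarith
    _ < ε := by linarith

section Laplace

lemma laplace_inj (g : ℝ → ℝ) (hg : Continuous g) (hb : ∀ t, |g t| ≤ 2)
    (h0 : ∀ n : ℕ, ∫ t in Ioi (0:ℝ), Real.exp (-((n:ℝ)+1) * t) * g t = 0) :
    ∀ t : ℝ, 0 < t → g t = 0 := by
  set G : ℝ → ℝ := fun u => u * g (-Real.log u) with hG_def
  have hGc : Continuous G := by
    rw [continuous_iff_continuousAt]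
    intro u
    rcases eq_or_ne u 0 with rfl | hu
    · rw [Metric.continuousAt_iff]
      intro ε hε
      refine ⟨ε / 2, by positivity, fun {v} hv => ?_⟩
      have hGv : |G v| ≤ 2 * |v| := by
        rw [hG_def]
        simp only [abs_mul]
        nlinarith [hb (-Real.log v), abs_nonneg v]
      have hG0 : G 0 = 0 := by simp [hG_def]
      rw [hG0, Real.dist_eq, sub_zero]
      rw [Real.dist_eq, sub_zero] at hv
      calc |G v| ≤ 2 * |v| := hGv
        _ < 2 * (ε / 2) := by nlinarith
        _ = ε := by ring
    · exact continuousAt_id.mul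
        ((hg.continuousAt).comp (Real.continuousAt_log hu).neg)
  have hb' : ∀ u, |G u| ≤ 2 * |u| := by
    intro u
    rw [hG_def]; simp only [abs_mul]
    nlinarith [hb (-Real.log u), abs_nonneg u]
  -- change of variables
  have himg : (fun t : ℝ => Real.exp (-t)) '' (Ioi 0) = Ioo 0 1 := by
    ext u
    constructor
    · rintro ⟨t, ht, rfl⟩
      exact ⟨Real.exp_pos _, by rw [Real.exp_lt_one_iff]; simpa using ht⟩
    · rintro ⟨hu0, hu1⟩
      refine ⟨-Real.log u, ?_, ?_⟩
      · simp only [mem_Ioi]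
        have := Real.log_neg hu0 hu1
        linarith
      · show Real.exp (-(-Real.log u)) = u
        rw [neg_neg, Real.exp_log hu0]
  have hinj : InjOn (fun t : ℝ => Real.exp (-t)) (Ioi 0) :=
    (Real.exp_injective.comp neg_injective).injOn
  have hderiv : ∀ t ∈ Ioi (0:ℝ), HasDerivWithinAt (fun t : ℝ => Real.exp (-t))
      (-Real.exp (-t)) (Ioi 0) t := by
    intro t _
    have h := (Real.hasDerivAt_exp (-t)).comp t (hasDerivAt_neg t)
    simpa [mul_comm, Function.comp_def] using h.hasDerivWithinAt
  have hmoment : ∀ n : ℕ, ∫ u in Ioo (0:ℝ) 1, u ^ n * G u = 0 := by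
    intro n
    have hcv := integral_image_eq_integral_abs_deriv_smul (f' := fun t => -Real.exp (-t))
      measurableSet_Ioi hderiv hinj (fun u => u ^ n * G u)
    rw [himg] at hcv
    rw [hcv]
    refine Eq.trans (setIntegral_congr_fun measurableSet_Ioi fun t ht => ?_) (h0 (n + 1))
    have hlog : -Real.log (Real.exp (-t)) = t := by rw [Real.log_exp]; ring
    simp only [hG_def, smul_eq_mul, abs_neg, abs_of_pos (Real.exp_pos _), hlog]
    rw [← Real.exp_nat_mul]
    have hre : Real.exp (-t) * (Real.exp ((n:ℝ) * -t) * (Real.exp (-t) * g t))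
        = Real.exp (-t) * Real.exp ((n:ℝ) * -t) * Real.exp (-t) * g t := by ring
    rw [hre, ← Real.exp_add, ← Real.exp_add]
    congr 1
    push_cast
    ring
  -- integrability facts
  have hGint : IntegrableOn G (Ioo (0:ℝ) 1) :=
    (hGc.integrableOn_Icc (a := 0) (b := 1)).mono_set Ioo_subset_Icc_self
  have habsGint : IntegrableOn (fun u => |G u|) (Ioo (0:ℝ) 1) := hGint.abs
  -- the functional
  set T : C(Icc (0:ℝ) 1, ℝ) → ℝ :=
    fun φ => ∫ u in Ioo (0:ℝ) 1, Set.IccExtend zero_le_one (⇑φ) u * G u with hT_def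
  have hext_cont : ∀ φ : C(Icc (0:ℝ) 1, ℝ), Continuous (Set.IccExtend zero_le_one (⇑φ)) :=
    fun φ => continuous_IccExtend_iff.2 φ.continuous
  have hint_ext : ∀ φ : C(Icc (0:ℝ) 1, ℝ),
      IntegrableOn (fun u => Set.IccExtend zero_le_one (⇑φ) u * G u) (Ioo (0:ℝ) 1) :=
    fun φ => (((hext_cont φ).mul hGc).integrableOn_Icc (a := 0) (b := 1)).mono_set
      Ioo_subset_Icc_self
  have hTlip : ∀ φ ψ : C(Icc (0:ℝ) 1, ℝ),
      |T φ - T ψ| ≤ (∫ u in Ioo (0:ℝ) 1, |G u|) * dist φ ψ := by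
    intro φ ψ
    rw [hT_def]
    simp only
    rw [← integral_sub (hint_ext φ) (hint_ext ψ)]
    have h1 : |∫ u in Ioo (0:ℝ) 1, (Set.IccExtend zero_le_one (⇑φ) u * G u
        - Set.IccExtend zero_le_one (⇑ψ) u * G u)|
        ≤ ∫ u in Ioo (0:ℝ) 1, |Set.IccExtend zero_le_one (⇑φ) u * G u
        - Set.IccExtend zero_le_one (⇑ψ) u * G u| := by
      simpa using MeasureTheory.norm_integral_le_integral_norm
        (μ := (volume : Measure ℝ).restrict (Ioo 0 1))
        fun u => Set.IccExtend zero_le_one (⇑φ) u * G u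
          - Set.IccExtend zero_le_one (⇑ψ) u * G u
    refine h1.trans ?_
    have h2 : ∀ u ∈ Ioo (0:ℝ) 1, |Set.IccExtend zero_le_one (⇑φ) u * G u
        - Set.IccExtend zero_le_one (⇑ψ) u * G u| ≤ dist φ ψ * |G u| := by
      intro u _
      rw [← sub_mul, abs_mul]
      have : |Set.IccExtend zero_le_one (⇑φ) u - Set.IccExtend zero_le_one (⇑ψ) u|
          ≤ dist φ ψ := by
        rw [Set.IccExtend, Set.IccExtend]
        have := ContinuousMap.dist_apply_le_dist (f := φ) (g := ψ) (projIcc 0 1 zero_le_one u)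
        rwa [Real.dist_eq] at this
      exact mul_le_mul_of_nonneg_right this (abs_nonneg _) |>.trans
        (le_of_eq rfl)
    calc (∫ u in Ioo (0:ℝ) 1, |Set.IccExtend zero_le_one (⇑φ) u * G u
          - Set.IccExtend zero_le_one (⇑ψ) u * G u|)
        ≤ ∫ u in Ioo (0:ℝ) 1, dist φ ψ * |G u| := by
          refine setIntegral_mono_on ((hint_ext φ).sub (hint_ext ψ)).abs
            (habsGint.const_mul _) measurableSet_Ioo h2
      _ = (∫ u in Ioo (0:ℝ) 1, |G u|) * dist φ ψ := by
          rw [integral_const_mul]; ring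
  have hTcont : Continuous T := by
    have hC : (0:ℝ) ≤ ∫ u in Ioo (0:ℝ) 1, |G u| :=
      integral_nonneg fun u => abs_nonneg _
    refine (LipschitzWith.of_dist_le_mul (K := (∫ u in Ioo (0:ℝ) 1, |G u|).toNNReal)
      (f := T) ?_).continuous
    intro φ ψ
    rw [Real.dist_eq]
    calc |T φ - T ψ| ≤ (∫ u in Ioo (0:ℝ) 1, |G u|) * dist φ ψ := hTlip φ ψ
      _ = ((∫ u in Ioo (0:ℝ) 1, |G u|).toNNReal : ℝ) * dist φ ψ := by
          rw [Real.coe_toNNReal _ hC]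
  -- T vanishes on polynomials
  have hTpoly : ∀ φ ∈ polynomialFunctions (Icc (0:ℝ) 1), T φ = 0 := by
    intro φ hφ
    rw [← SetLike.mem_coe, polynomialFunctions_coe] at hφ
    obtain ⟨p, rfl⟩ := hφ
    have heq : T ((Polynomial.toContinuousMapOnAlgHom (Icc (0:ℝ) 1)) p)
        = ∫ u in Ioo (0:ℝ) 1, p.eval u * G u := by
      refine setIntegral_congr_fun measurableSet_Ioo fun u hu => ?_
      have humem : u ∈ Icc (0:ℝ) 1 := Ioo_subset_Icc_self hu
      rw [Set.IccExtend_of_mem _ _ humem]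
      rfl
    rw [heq]
    clear heq
    induction p using Polynomial.induction_on' with
    | add p q hp hq =>
      have hip : IntegrableOn (fun u => p.eval u * G u) (Ioo (0:ℝ) 1) :=
        (((p.continuous_aeval).mul hGc).integrableOn_Icc (a := 0) (b := 1)).mono_set
          Ioo_subset_Icc_self
      have hiq : IntegrableOn (fun u => q.eval u * G u) (Ioo (0:ℝ) 1) :=
        (((q.continuous_aeval).mul hGc).integrableOn_Icc (a := 0) (b := 1)).mono_set
          Ioo_subset_Icc_self
      have : (∫ u in Ioo (0:ℝ) 1, (p + q).eval u * G u)
          = (∫ u in Ioo (0:ℝ) 1, p.eval u * G u) + ∫ u in Ioo (0:ℝ) 1, q.eval u * G u := by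
        rw [← integral_add hip hiq]
        refine setIntegral_congr_fun measurableSet_Ioo fun u _ => ?_
        simp [add_mul]
      rw [this, hp, hq, add_zero]
    | monomial n a =>
      have : (∫ u in Ioo (0:ℝ) 1, (Polynomial.monomial n a).eval u * G u)
          = a * ∫ u in Ioo (0:ℝ) 1, u ^ n * G u := by
        rw [← integral_const_mul]
        refine setIntegral_congr_fun measurableSet_Ioo fun u _ => ?_
        simp [Polynomial.eval_monomial]; ring
      rw [this, hmoment n, mul_zero]
  -- conclude T vanishes on everything, in particular on G itself
  have hclosure := polynomialFunctions_closure_eq_top (0:ℝ) 1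
  set GC : C(Icc (0:ℝ) 1, ℝ) := ⟨fun u => G u, hGc.comp continuous_subtype_val⟩ with hGC_def
  have hGC_mem : GC ∈ closure (polynomialFunctions (Icc (0:ℝ) 1) : Set C(Icc (0:ℝ) 1, ℝ)) := by
    have h : GC ∈ (polynomialFunctions (Icc (0:ℝ) 1)).topologicalClosure := by
      rw [hclosure]; trivial
    rwa [← SetLike.mem_coe, Subalgebra.topologicalClosure_coe] at h
  have hTGC : T GC = 0 := by
    have hclosed : IsClosed {φ : C(Icc (0:ℝ) 1, ℝ) | T φ = 0} :=
      isClosed_eq hTcont continuous_const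
    have hsub : (polynomialFunctions (Icc (0:ℝ) 1) : Set C(Icc (0:ℝ) 1, ℝ))
        ⊆ {φ | T φ = 0} := fun φ hφ => hTpoly φ hφ
    exact (closure_minimal hsub hclosed) hGC_mem
  have hGG : (∫ u in Ioo (0:ℝ) 1, G u * G u) = 0 := by
    have h1 : T GC = ∫ u in Ioo (0:ℝ) 1, G u * G u := by
      refine setIntegral_congr_fun measurableSet_Ioo fun u hu => ?_
      rw [Set.IccExtend_of_mem _ _ (Ioo_subset_Icc_self hu)]
      rfl
    rw [← h1, hTGC]
  -- positivity argument
  have hGzero : ∀ u ∈ Ioo (0:ℝ) 1, G u = 0 := by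
    by_contra hcon
    push_neg at hcon
    obtain ⟨u₀, hu₀, hGu₀⟩ := hcon
    have hpos : 0 < ∫ u in Ioo (0:ℝ) 1, G u * G u := by
      rw [setIntegral_pos_iff_support_of_nonneg_ae]
      · have hopen : IsOpen (Function.support fun u => G u * G u) := by
          have : Function.support (fun u => G u * G u) = {u | G u * G u ≠ 0} := rfl
          rw [this]
          exact isOpen_ne_fun (hGc.mul hGc) continuous_const
        refine (hopen.inter isOpen_Ioo).measure_pos volume ⟨u₀, ?_, hu₀⟩
        simp only [Function.mem_support]
        exact mul_ne_zero hGu₀ hGu₀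
      · filter_upwards with u
        exact mul_self_nonneg (G u)
      · exact ((hGc.mul hGc).integrableOn_Icc (a := 0) (b := 1)).mono_set Ioo_subset_Icc_self
    rw [hGG] at hpos
    exact lt_irrefl 0 hpos
  intro t ht
  have hu : Real.exp (-t) ∈ Ioo (0:ℝ) 1 :=
    ⟨Real.exp_pos _, by rw [Real.exp_lt_one_iff]; simpa using ht⟩
  have := hGzero _ hu
  rw [hG_def] at this
  simp only [Real.log_exp, neg_neg] at this
  rcases mul_eq_zero.1 this with h | h
  · exact absurd h (ne_of_gt (Real.exp_pos _))
  · exact h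

end Laplace

section Scheme

variable {M : Type*} [MetricSpace M] [MeasurableSpace M] [BorelSpace M]

/-- Bundle of the hypotheses (S1)-(S4). -/
structure Good (S : M → Set (IPath M)) : Prop where
  ne : ∀ x, (S x).Nonempty
  cpt : ∀ x, IsCompact (S x)
  init : ∀ x, ∀ w ∈ S x, w 0 = x
  meas : ∀ K : Set (IPath M), IsClosed K → MeasurableSet {x | (S x ∩ K).Nonempty}
  shift_mem : ∀ x, ∀ w ∈ S x, ∀ s : ℝ≥0, shift s w ∈ S (w s)
  splice_mem : ∀ x, ∀ w ∈ S x, ∀ s : ℝ≥0, ∀ v, v ∈ S (w s) → ∀ h : w s = v 0,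
    splice s w v h ∈ S x

/-- One reduction step: restrict to minimizers of `J lam f`. -/
def nextS (lam : ℝ) (f : M → ℝ) (S : M → Set (IPath M)) : M → Set (IPath M) :=
  fun x => {w | w ∈ S x ∧ ∀ v ∈ S x, J lam f w ≤ J lam f v}

lemma nextS_subset {lam : ℝ} {f : M → ℝ} {S : M → Set (IPath M)} (x : M) :
    nextS lam f S x ⊆ S x := fun _ hw => hw.1

theorem Good.next {S : M → Set (IPath M)} (hS : Good S) {lam : ℝ} {f : M → ℝ}
    (hlam : 1 ≤ lam) (hlip : LipschitzWith 1 f) (hf1 : ∀ y, |f y| ≤ 1) :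
    Good (nextS lam f S) := by
  have hlam0 : (0:ℝ) < lam := lt_of_lt_of_le one_pos hlam
  have hf : Continuous f := by
    have := hlip.continuous
    exact this
  have hJc : Continuous (J lam f) := J_cont hlam hlip hf1
  constructor
  · -- nonempty
    intro x
    obtain ⟨w, hw, hmin⟩ := (hS.cpt x).exists_isMinOn (hS.ne x) hJc.continuousOn
    exact ⟨w, hw, fun v hv => hmin hv⟩
  · -- compact
    intro x
    have : nextS lam f S x = S x ∩ ⋂ v ∈ S x, {w | J lam f w ≤ J lam f v} := by
      ext w
      simp [nextS, mem_iInter]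
    rw [this]
    refine (hS.cpt x).inter_right ?_
    exact isClosed_biInter fun v _ => isClosed_le hJc continuous_const
  · exact fun x w hw => hS.init x w hw.1
  · -- measurability
    intro K hK
    have hCmeas : ∀ q : ℚ, MeasurableSet {x | (S x ∩ {w | J lam f w ≤ (q:ℝ)}).Nonempty} :=
      fun q => hS.meas _ (isClosed_le hJc continuous_const)
    have hBmeas : ∀ q : ℚ,
        MeasurableSet {x | (S x ∩ (K ∩ {w | J lam f w ≤ (q:ℝ)})).Nonempty} :=
      fun q => hS.meas _ (hK.inter (isClosed_le hJc continuous_const))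
    have hEq : {x | (nextS lam f S x ∩ K).Nonempty}
        = {x | (S x ∩ K).Nonempty} ∩ ⋂ q : ℚ,
          ((⋃ q' : ℚ, ⋃ _ : (q':ℝ) < (q:ℝ), {x | (S x ∩ {w | J lam f w ≤ (q':ℝ)}).Nonempty})ᶜ
            ∪ {x | (S x ∩ (K ∩ {w | J lam f w ≤ (q:ℝ)})).Nonempty}) := by
      ext x
      simp only [mem_inter_iff, mem_iInter, mem_union, mem_compl_iff, mem_iUnion,
        mem_setOf_eq, not_exists]
      constructor
      · rintro ⟨w, ⟨hwS, hwmin⟩, hwK⟩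
        refine ⟨⟨w, hwS, hwK⟩, fun q => ?_⟩
        by_cases hq : ∃ q' : ℚ, (q':ℝ) < (q:ℝ) ∧ (S x ∩ {w | J lam f w ≤ (q':ℝ)}).Nonempty
        · obtain ⟨q', hq'lt, v, hvS, hvle⟩ := hq
          right
          exact ⟨w, hwS, hwK, le_trans (hwmin v hvS) (le_of_lt (lt_of_le_of_lt hvle hq'lt))⟩
        · left
          intro q' hq' hne
          exact hq ⟨q', hq', hne⟩
      · rintro ⟨⟨w₀, hw₀S, hw₀K⟩, hall⟩
        -- minimizer over S x
        obtain ⟨wm, hwmS, hwmmin⟩ := (hS.cpt x).exists_isMinOn (hS.ne x) hJc.continuousOn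
        -- minimizer over S x ∩ K
        obtain ⟨wk, hwk, hwkmin⟩ := ((hS.cpt x).inter_right hK).exists_isMinOn
          ⟨w₀, hw₀S, hw₀K⟩ hJc.continuousOn
        have hle : J lam f wk ≤ J lam f wm := by
          by_contra hcon
          push_neg at hcon
          obtain ⟨q, hq1, hq2⟩ := exists_rat_btwn hcon
          obtain ⟨q', hq'1, hq'2⟩ := exists_rat_btwn hq1
          rcases hall q with h | h
          · exact h q' (by exact_mod_cast hq'2) ⟨wm, hwmS, le_of_lt hq'1⟩
          · obtain ⟨v, hvS, hvK, hvle⟩ := h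
            have h2 : J lam f wk ≤ J lam f v := hwkmin (⟨hvS, hvK⟩ : v ∈ S x ∩ K)
            simp only [mem_setOf_eq] at hvle
            linarith
        refine ⟨wk, ⟨hwk.1, fun v hv => le_trans hle (hwmmin hv)⟩, hwk.2⟩
    rw [hEq]
    refine MeasurableSet.inter (hS.meas K hK) ?_
    refine MeasurableSet.iInter fun q => ?_
    refine MeasurableSet.union ?_ (hBmeas q)
    refine MeasurableSet.compl ?_
    exact MeasurableSet.iUnion fun q' => MeasurableSet.iUnion fun _ => hCmeas q'
  · -- shift stability
    rintro x w ⟨hwS, hwmin⟩ s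
    refine ⟨hS.shift_mem x w hwS s, fun v hv => ?_⟩
    have h : w s = v 0 := (hS.init _ v hv).symm
    have hsp : splice s w v h ∈ S x := hS.splice_mem x w hwS s v hv h
    have h1 : J lam f w ≤ J lam f (splice s w v h) := hwmin _ hsp
    have h2 := J_splice_sub hlam0 hf hf1 w v s h
    nlinarith [Real.exp_pos (-lam * (s:ℝ))]
  · -- splice stability
    rintro x w ⟨hwS, hwmin⟩ s v ⟨hvS, hvmin⟩ h
    refine ⟨hS.splice_mem x w hwS s v hvS h, fun u hu => ?_⟩
    have hsw : shift s w ∈ S (w s) := hS.shift_mem x w hwS s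
    have h1 : J lam f v ≤ J lam f (shift s w) := hvmin _ hsw
    have h2 := J_splice_sub hlam0 hf hf1 w v s h
    have h3 : J lam f w ≤ J lam f u := hwmin u hu
    nlinarith [Real.exp_pos (-lam * (s:ℝ))]

/-- Two minimizers have the same `J` value. -/
lemma nextS_J_eq {lam : ℝ} {f : M → ℝ} {S : M → Set (IPath M)} {x : M} {w v : IPath M}
    (hw : w ∈ nextS lam f S x) (hv : v ∈ nextS lam f S x) :
    J lam f w = J lam f v :=
  le_antisymm (hw.2 v hv.1) (hv.2 w hw.1)

end Scheme

section Iterate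

variable {M : Type*} [MetricSpace M] [MeasurableSpace M] [BorelSpace M]

/-- The iterated reduction scheme. -/
def iterS (S : M → Set (IPath M)) (lam : ℕ → ℝ) (fs : ℕ → M → ℝ) : ℕ → M → Set (IPath M)
  | 0 => S
  | (n+1) => nextS (lam n) (fs n) (iterS S lam fs n)

theorem aux_main [SecondCountableTopology M] [Nonempty M]
    (S : M → Set (IPath M)) (hS : Good S) :
    ∃ u : M → IPath M, Measurable u ∧ (∀ x, u x ∈ S x) ∧
      (∀ x, ∀ t₁ t₂ : ℝ≥0, u (u x t₁) t₂ = u x (t₁ + t₂)) ∧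
      ∀ t : ℝ≥0, Measurable fun x => u x t := by
  classical
  -- a countable separating family of 1-Lipschitz functions bounded by 1
  set d : ℕ → M := TopologicalSpace.denseSeq M with hd_def
  have hd : DenseRange d := TopologicalSpace.denseRange_denseSeq M
  set fs : ℕ → M → ℝ := fun k y => min (dist (d k) y) 1 with hfs_def
  have hlipf : ∀ k, LipschitzWith 1 (fs k) :=
    fun k => (LipschitzWith.dist_right (d k)).min_const 1
  have hbnd : ∀ k y, |fs k y| ≤ 1 := by
    intro k y
    rw [hfs_def]
    simp only
    rw [abs_of_nonneg (le_min dist_nonneg zero_le_one)]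
    exact min_le_right _ _
  have hsep : ∀ a b : M, (∀ k, fs k a = fs k b) → a = b := by
    intro a b hab
    apply eq_of_forall_dist_le
    intro ε hε
    set δ := min (ε/2) (1/2) with hδ_def
    have hδ0 : 0 < δ := lt_min (by linarith) (by norm_num)
    have hδhalf : δ ≤ 1/2 := min_le_right _ _
    have hδε : δ ≤ ε/2 := min_le_left _ _
    obtain ⟨k, hk⟩ := hd.exists_dist_lt a hδ0
    have h1 : dist (d k) a < δ := by rwa [dist_comm]
    have hfa : fs k a < δ := lt_of_le_of_lt (min_le_left _ _) h1
    have hfb : fs k b < δ := hab k ▸ hfa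
    have hfb' : min (dist (d k) b) 1 < δ := hfb
    have h2 : dist (d k) b < δ := by
      rcases min_cases (dist (d k) b) 1 with ⟨hmin, _⟩ | ⟨hmin, _⟩
      · rw [← hmin]; exact hfb'
      · rw [hmin] at hfb'; linarith
    calc dist a b ≤ dist a (d k) + dist (d k) b := dist_triangle _ _ _
      _ ≤ δ + δ := by rw [dist_comm a (d k)]; linarith
      _ ≤ ε := by linarith
  -- enumeration of pairs
  set e : ℕ ≃ ℕ × ℕ := (Denumerable.eqv (ℕ × ℕ)).symm with he_def
  set lam : ℕ → ℝ := fun n => ((e n).1 : ℝ) + 1 with hlam_def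
  set fseq : ℕ → M → ℝ := fun n => fs (e n).2 with hfseq_def
  have hlam1 : ∀ n, 1 ≤ lam n := by
    intro n
    rw [hlam_def]
    have : (0:ℝ) ≤ ((e n).1 : ℝ) := Nat.cast_nonneg _
    simp only
    linarith
  set T : ℕ → M → Set (IPath M) := iterS S lam fseq with hT_def
  have hT0 : T 0 = S := rfl
  have hgood : ∀ n, Good (T n) := by
    intro n
    induction n with
    | zero => exact hS
    | succ n ih => exact ih.next (hlam1 n) (hlipf _) (fun y => hbnd _ y)
  have hsubset : ∀ n x, T (n+1) x ⊆ T n x := fun n x => nextS_subset x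
  set Sf : M → Set (IPath M) := fun x => ⋂ n, T n x with hSf_def
  have hSfS : ∀ x, Sf x ⊆ S x := fun x => iInter_subset _ 0
  have hkey : ∀ K : Set (IPath M), IsClosed K → ∀ x,
      ((Sf x ∩ K).Nonempty ↔ ∀ n, (T n x ∩ K).Nonempty) := by
    intro K hK x
    constructor
    · rintro ⟨w, hw, hwK⟩ n
      exact ⟨w, mem_iInter.1 hw n, hwK⟩
    · intro hn
      have hres := IsCompact.nonempty_iInter_of_sequence_nonempty_isCompact_isClosed
        (fun n => T n x ∩ K) (fun n => inter_subset_inter_left K (hsubset n x)) hn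
        (((hgood 0).cpt x).inter_right hK)
        (fun n => (((hgood n).cpt x).inter_right hK).isClosed)
      rwa [← iInter_inter] at hres
  have hne : ∀ x, (Sf x).Nonempty := by
    intro x
    have := (hkey univ isClosed_univ x).2
      (fun n => by simpa [inter_univ] using (hgood n).ne x)
    simpa [inter_univ] using this
  -- uniqueness
  have huniq : ∀ x, ∀ w ∈ Sf x, ∀ v ∈ Sf x, w = v := by
    intro x w hw v hv
    have hJeq : ∀ n k : ℕ, J ((n:ℝ)+1) (fs k) w = J ((n:ℝ)+1) (fs k) v := by
      intro n k
      set m := e.symm (n, k) with hm_def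
      have hm : e m = (n, k) := e.apply_symm_apply _
      have hw' : w ∈ T (m+1) x := mem_iInter.1 hw (m+1)
      have hv' : v ∈ T (m+1) x := mem_iInter.1 hv (m+1)
      have heq : J (lam m) (fseq m) w = J (lam m) (fseq m) v := nextS_J_eq hw' hv'
      simp only [hlam_def, hfseq_def, hm] at heq
      exact heq
    have hptwise : ∀ k, ∀ t : ℝ≥0, fs k (w t) = fs k (v t) := by
      intro k t
      rcases eq_or_ne t 0 with rfl | ht0
      · rw [(hgood 0).init x w (mem_iInter.1 hw 0), (hgood 0).init x v (mem_iInter.1 hv 0)]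
      · set g : ℝ → ℝ := fun r => fs k (w r.toNNReal) - fs k (v r.toNNReal) with hg_def
        have hgc : Continuous g :=
          (((hlipf k).continuous).comp (w.continuous.comp continuous_real_toNNReal)).sub
            (((hlipf k).continuous).comp (v.continuous.comp continuous_real_toNNReal))
        have hgb : ∀ r, |g r| ≤ 2 := by
          intro r
          have h1 := hbnd k (w r.toNNReal)
          have h2 := hbnd k (v r.toNNReal)
          rw [hg_def]
          simp only
          exact (abs_sub _ _).trans (by linarith)
        have hzero : ∀ n : ℕ, ∫ r in Ioi (0:ℝ), Real.exp (-((n:ℝ)+1) * r) * g r = 0 := by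
          intro n
          have hlamn : (0:ℝ) < ((n:ℝ)+1) := by positivity
          have hIw := integrableJ hlamn (hlipf k).continuous (hbnd k) w
          have hIv := integrableJ hlamn (hlipf k).continuous (hbnd k) v
          have hsubJ : (∫ r in Ioi (0:ℝ), Real.exp (-((n:ℝ)+1) * r) * g r)
              = J ((n:ℝ)+1) (fs k) w - J ((n:ℝ)+1) (fs k) v := by
            rw [J, J, ← integral_sub hIw hIv]
            refine setIntegral_congr_fun measurableSet_Ioi fun r _ => ?_
            rw [hg_def]
            ring
          rw [hsubJ, hJeq n k, sub_self]
        have hpos : (0:ℝ) < (t:ℝ) := by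
          exact_mod_cast pos_iff_ne_zero.2 ht0
        have := laplace_inj g hgc hgb hzero (t:ℝ) hpos
        rw [hg_def] at this
        simp only [Real.toNNReal_coe] at this
        linarith
    exact ContinuousMap.ext fun t => hsep _ _ fun k => hptwise k t
  -- the selection
  set u : M → IPath M := fun x => (hne x).some with hu_def
  have humem : ∀ x, u x ∈ Sf x := fun x => (hne x).some_mem
  have hulem : ∀ x w, w ∈ Sf x → w = u x := fun x w hw => huniq x w hw (u x) (humem x)
  have hmeasu : Measurable u := by
    apply measurable_of_isClosed
    intro K hK
    have hpre : u ⁻¹' K = {x | (Sf x ∩ K).Nonempty} := by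
      ext x
      simp only [mem_preimage, mem_setOf_eq]
      constructor
      · intro h
        exact ⟨u x, humem x, h⟩
      · rintro ⟨w, hw, hwK⟩
        rwa [hulem x w hw] at hwK
    rw [hpre]
    have hEq : {x | (Sf x ∩ K).Nonempty} = ⋂ n, {x | (T n x ∩ K).Nonempty} := by
      ext x
      simp only [mem_iInter, mem_setOf_eq]
      exact hkey K hK x
    rw [hEq]
    exact MeasurableSet.iInter fun n => (hgood n).meas K hK
  have hshiftSf : ∀ x, ∀ w ∈ Sf x, ∀ s : ℝ≥0, shift s w ∈ Sf (w s) := by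
    intro x w hw s
    exact mem_iInter.2 fun n => (hgood n).shift_mem x w (mem_iInter.1 hw n) s
  refine ⟨u, hmeasu, fun x => hSfS x (humem x), ?_, ?_⟩
  · intro x t₁ t₂
    have h1 : shift t₁ (u x) ∈ Sf ((u x) t₁) := hshiftSf x (u x) (humem x) t₁
    have h2 : shift t₁ (u x) = u ((u x) t₁) := hulem _ _ h1
    calc u (u x t₁) t₂ = shift t₁ (u x) t₂ := by rw [h2]
      _ = u x (t₁ + t₂) := rfl
  · intro t
    exact (continuous_eval_const t).measurable.comp hmeasu

end Iterate

end SemiflowAux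

/-- **Semiflow selection theorem.**  If `X` is a separable complete metric space and
`S : X → 2^Ω` has nonempty compact values `S x ⊆ Ω_x` (S1), is measurable (S2), is
compatible with the shifts (S3), and is stable under splicing (S4), then `S` admits a
Borel measurable selection `𝔲` with the semigroup property
`𝔲(t₂, 𝔲(t₁, x)) = 𝔲(t₁ + t₂, x)`; moreover each time-`t` map `U(t) : X → X` is Borel
measurable. -/
theorem semiflow_selection
    {X : Type*} [MetricSpace X] [CompleteSpace X] [SecondCountableTopology X]
    [MeasurableSpace X] [BorelSpace X]
    (S : X → Set (IPath X))
    (hS1a : ∀ x, (S x).Nonempty)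
    (hS1b : ∀ x, IsCompact (S x))
    (hS1c : ∀ x, ∀ w ∈ S x, w 0 = x)
    (hS2 : ∀ K : Set (IPath X), IsClosed K → MeasurableSet {x | (S x ∩ K).Nonempty})
    (hS3 : ∀ x, ∀ w ∈ S x, ∀ s : ℝ≥0, shift s w ∈ S (w s))
    (hS4 : ∀ x, ∀ w ∈ S x, ∀ s : ℝ≥0, ∀ v, ∀ hv : v ∈ S (w s),
      splice s w v ((hS1c _ v hv).symm) ∈ S x) :
    ∃ u : X → IPath X, Measurable u ∧ (∀ x, u x ∈ S x) ∧
      (∀ x, ∀ t₁ t₂ : ℝ≥0, u (u x t₁) t₂ = u x (t₁ + t₂)) ∧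
      ∀ t : ℝ≥0, Measurable fun x => u x t := by
  rcases isEmpty_or_nonempty X with hE | hN
  · exact ⟨fun x => (hS1a x).some, measurable_of_empty _, fun x => (hS1a x).some_mem,
      fun x => isEmptyElim x, fun t => measurable_of_empty _⟩
  · have hGood : SemiflowAux.Good S :=
      { ne := hS1a, cpt := hS1b, init := hS1c, meas := hS2, shift_mem := hS3,
        splice_mem := fun x w hw s v hv h => hS4 x w hw s v hv }
    exact SemiflowAux.aux_main S hGood
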